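/- arXiv:1603.00681 — 15 statements merged into one kernel-verified Lean document; each statement's English description precedes it below -/
import Mathlib

section
/- Let a, b be real numbers with a > 0 and b > 0, and let α = (a*b + √(a²b² + 4ab))/2 and β = (a*b − √(a²b² + 4ab))/2. Then for every natural number m, the even-indexed bi-periodic Fibonacci number satisfies q (2m) = a * (α^(2m) − β^(2m)) / ((a*b)^m * (α − β)). (This is the even-index component of the Binet formula of Theorem 2.1.) -/
theorem biperiodic_fib_binet_even (a b : ℝ) (ha : 0 < a) (hb : 0 < b)
    (q : ℤ → ℝ) (hq0 : q 0 = 0) (hq1 : q 1 = 1)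
    (hqe : ∀ n : ℤ, Even n → q n = a * q (n - 1) + q (n - 2))
    (hqo : ∀ n : ℤ, Odd n → q n = b * q (n - 1) + q (n - 2))
    (α β : ℝ)
    (hα : α = (a * b + Real.sqrt (a ^ 2 * b ^ 2 + 4 * (a * b))) / 2)
    (hβ : β = (a * b - Real.sqrt (a ^ 2 * b ^ 2 + 4 * (a * b))) / 2) :
    ∀ m : ℕ, q (2 * m) =
      a * (α ^ (2 * m) - β ^ (2 * m)) / ((a * b) ^ m * (α - β)) := by
  set s := Real.sqrt (a ^ 2 * b ^ 2 + 4 * (a * b)) with hs_def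
  have hdpos : 0 < a ^ 2 * b ^ 2 + 4 * (a * b) := by positivity
  have hs2 : s ^ 2 = a ^ 2 * b ^ 2 + 4 * (a * b) := Real.sq_sqrt hdpos.le
  have hspos : 0 < s := Real.sqrt_pos.mpr hdpos
  have habpos : 0 < a * b := by positivity
  have hsub : α - β = s := by rw [hα, hβ]; ring
  have hsum : α + β = a * b := by rw [hα, hβ]; ring
  have hα2 : α ^ 2 = a * b * α + a * b := by
    rw [hα]; nlinarith [hs2]
  have hβ2 : β ^ 2 = a * b * β + a * b := by
    rw [hβ]; nlinarith [hs2]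
  have hα4 : α ^ 4 = (a * b) * (a * b + 2) * α ^ 2 - (a * b) ^ 2 := by
    linear_combination (α ^ 2 + a * b * α - a * b) * hα2
  have hβ4 : β ^ 4 = (a * b) * (a * b + 2) * β ^ 2 - (a * b) ^ 2 := by
    linear_combination (β ^ 2 + a * b * β - a * b) * hβ2
  -- two-step recurrence on even indices
  have hrec : ∀ n : ℤ, Even n → q (n + 2) = (a * b + 2) * q n - q (n - 2) := by
    intro n hn
    have h1 := hqe (n + 2) (hn.add even_two)
    have h2 := hqo (n + 1) (Even.add_one hn)
    have h3 := hqe n hn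
    have e1 : n + 2 - 1 = n + 1 := by ring
    have e2 : n + 2 - 2 = n := by ring
    have e3 : n + 1 - 1 = n := by ring
    have e4 : n + 1 - 2 = n - 1 := by ring
    rw [e1, e2] at h1
    rw [e3, e4] at h2
    apply mul_left_cancel₀ (ne_of_gt ha)
    linear_combination a * h1 + a ^ 2 * h2 - a * h3
  have hq2 : q 2 = a := by
    have h := hqe 2 ⟨1, by norm_num⟩
    norm_num at h
    rw [h, hq1, hq0]; ring
  have key : ∀ m : ℕ,
      (q (2 * (m : ℤ)) * ((a * b) ^ m * s) = a * (α ^ (2 * m) - β ^ (2 * m))) ∧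
      (q (2 * ((m + 1 : ℕ) : ℤ)) * ((a * b) ^ (m + 1) * s)
        = a * (α ^ (2 * (m + 1)) - β ^ (2 * (m + 1)))) := by
    intro m
    induction m with
    | zero =>
      constructor
      · norm_num [hq0]
      · push_cast
        norm_num
        rw [hq2]
        linear_combination (-(a * (α - β))) * hsum - a * (a * b) * hsub
    | succ n ih =>
      obtain ⟨ih0, ih1⟩ := ih
      push_cast at ih1 ⊢
      rw [show 2 * ((n : ℤ) + 1) = 2 * (n : ℤ) + 2 from by ring] at ih1
      constructor
      · rw [show 2 * ((n : ℤ) + 1) = 2 * (n : ℤ) + 2 from by ring]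
        linear_combination ih1
      · have h := hrec (2 * (n : ℤ) + 2) ⟨(n : ℤ) + 1, by ring⟩
        rw [show 2 * (n : ℤ) + 2 - 2 = 2 * (n : ℤ) from by ring] at h
        rw [show 2 * ((n : ℤ) + 1 + 1) = 2 * (n : ℤ) + 2 + 2 from by ring, h]
        linear_combination ((a * b) * (a * b + 2)) * ih1 - (a * b) ^ 2 * ih0
          - a * α ^ (2 * n) * hα4 + a * β ^ (2 * n) * hβ4
  intro m
  have h := (key m).1
  rw [hsub, eq_div_iff (by positivity)]
  exact h
end

section
/- Let a, b be real numbers with a > 0 and b > 0, and let α = (a*b + √(a²b² + 4ab))/2 and β = (a*b − √(a²b² + 4ab))/2. Then for every natural number m, the odd-indexed bi-periodic Fibonacci number satisfies q (2m+1) = (α^(2m+1) − β^(2m+1)) / ((a*b)^m * (α − β)). (This is the odd-index component of the Binet formula of Theorem 2.1.) -/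
theorem biperiodic_fib_binet_odd (a b : ℝ) (ha : 0 < a) (hb : 0 < b)
    (q : ℤ → ℝ) (hq0 : q 0 = 0) (hq1 : q 1 = 1)
    (hqe : ∀ n : ℤ, Even n → q n = a * q (n - 1) + q (n - 2))
    (hqo : ∀ n : ℤ, Odd n → q n = b * q (n - 1) + q (n - 2))
    (α β : ℝ)
    (hα : α = (a * b + Real.sqrt (a ^ 2 * b ^ 2 + 4 * (a * b))) / 2)
    (hβ : β = (a * b - Real.sqrt (a ^ 2 * b ^ 2 + 4 * (a * b))) / 2) :
    ∀ m : ℕ, q (2 * m + 1) =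
      (α ^ (2 * m + 1) - β ^ (2 * m + 1)) / ((a * b) ^ m * (α - β)) := by
  set s := Real.sqrt (a ^ 2 * b ^ 2 + 4 * (a * b)) with hsdef
  have hab : 0 < a * b := mul_pos ha hb
  have hpos : (0:ℝ) < a ^ 2 * b ^ 2 + 4 * (a * b) := by positivity
  have hs2 : s ^ 2 = a ^ 2 * b ^ 2 + 4 * (a * b) := Real.sq_sqrt hpos.le
  have hs : 0 < s := Real.sqrt_pos.mpr hpos
  have hdiff : α - β = s := by rw [hα, hβ]; ring
  have hA : α ^ 2 = a * b * α + a * b := by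
    rw [hα]; field_simp; linarith [hs2]
  have hB : β ^ 2 = a * b * β + a * b := by
    rw [hβ]; field_simp; linarith [hs2]
  have hA4 : α ^ 4 = a * b * (a * b + 2) * α ^ 2 - (a * b) ^ 2 := by
    nlinarith [hA]
  have hB4 : β ^ 4 = a * b * (a * b + 2) * β ^ 2 - (a * b) ^ 2 := by
    nlinarith [hB]
  -- values of q at small indices
  have hq2 : q 2 = a := by
    have := hqe 2 ⟨1, by ring⟩
    norm_num at this; rw [this, hq0, hq1]; ring
  have hq3 : q 3 = a * b + 1 := by
    have := hqo 3 ⟨1, by ring⟩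
    norm_num at this; rw [this, hq1, hq2]; ring
  -- odd-index recurrence
  have hrec : ∀ n : ℤ, q (2 * n + 5) =
      (a * b + 2) * q (2 * n + 3) - q (2 * n + 1) := by
    intro n
    have h1 := hqo (2 * n + 5) ⟨n + 2, by ring⟩
    have h2 := hqe (2 * n + 4) ⟨n + 2, by ring⟩
    have h3 := hqo (2 * n + 3) ⟨n + 1, by ring⟩
    have e1 : 2 * n + 5 - 1 = 2 * n + 4 := by ring
    have e2 : 2 * n + 5 - 2 = 2 * n + 3 := by ring
    have e3 : 2 * n + 4 - 1 = 2 * n + 3 := by ring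
    have e4 : 2 * n + 4 - 2 = 2 * n + 2 := by ring
    have e5 : 2 * n + 3 - 1 = 2 * n + 2 := by ring
    have e6 : 2 * n + 3 - 2 = 2 * n + 1 := by ring
    rw [e1, e2] at h1
    rw [e3, e4] at h2
    rw [e5, e6] at h3
    rw [h1, h2]
    nlinarith [h3]
  have key : ∀ m : ℕ,
      (q (2 * (m:ℤ) + 1) =
        (α ^ (2 * m + 1) - β ^ (2 * m + 1)) / ((a * b) ^ m * (α - β))) ∧
      (q (2 * ((m:ℤ)+1) + 1) =
        (α ^ (2 * (m+1) + 1) - β ^ (2 * (m+1) + 1)) / ((a * b) ^ (m+1) * (α - β))) := by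
    intro m
    induction m with
    | zero =>
      constructor
      · norm_num [hq1, hdiff]
        field_simp
      · norm_num
        rw [hq3, hdiff, eq_div_iff (by positivity)]
        linear_combination (-(α + a * b)) * hA + (β + a * b) * hB -
          a * b * (a * b + 1) * hdiff
    | succ n ih =>
      refine ⟨ih.2, ?_⟩
      have harg : 2 * (((n:ℕ)+1 : ℕ) + 1 : ℤ) + 1 = 2 * (n:ℤ) + 5 := by push_cast; ring
      rw [harg, hrec n]
      have h1 := ih.1
      have h2 := ih.2
      rw [show 2 * ((n:ℤ) + 1) + 1 = 2 * (n:ℤ) + 3 by ring] at h2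
      have hconv1 : (α ^ (2 * (n+1) + 1) - β ^ (2 * (n+1) + 1)) / ((a * b) ^ (n+1) * (α - β)) =
          (a * b * (α ^ (2 * n + 3) - β ^ (2 * n + 3))) / ((a * b) ^ (n+2) * (α - β)) := by
        rw [hdiff, div_eq_div_iff (by positivity) (by positivity)]
        ring
      have hconv0 : (α ^ (2 * n + 1) - β ^ (2 * n + 1)) / ((a * b) ^ n * (α - β)) =
          ((a * b) ^ 2 * (α ^ (2 * n + 1) - β ^ (2 * n + 1))) / ((a * b) ^ (n+2) * (α - β)) := by
        rw [hdiff, div_eq_div_iff (by positivity) (by positivity)]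
        ring
      rw [h1, h2, hconv1, hconv0]
      rw [show (n + 1 + 1) = n + 2 from rfl]
      rw [← mul_div_assoc, ← sub_div]
      congr 1
      linear_combination (-(α ^ (2 * n + 1))) * hA4 + β ^ (2 * n + 1) * hB4
  intro m
  exact (key m).1
end

section
/- Let a, b be real numbers with a > 0 and b > 0, and let α = (a*b + √(a²b² + 4ab))/2 and β = (a*b − √(a²b² + 4ab))/2. Then for all natural numbers n, r with n ≥ r ≥ 1, the bi-periodic Fibonacci numbers satisfy the Catalan-type identity q (2n−2r) * q (2n+2r) − (q (2n))² = a² * (2*(a*b)^(2r) − α^(4r) − β^(4r)) / ((a*b)^(2r) * (α − β)²). (This is the scalar analogue of Theorem 2.2.) -/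
theorem biperiodic_fib_catalan_even_index (a b : ℝ) (ha : 0 < a) (hb : 0 < b)
    (q : ℤ → ℝ) (hq0 : q 0 = 0) (hq1 : q 1 = 1)
    (hqe : ∀ n : ℤ, Even n → q n = a * q (n - 1) + q (n - 2))
    (hqo : ∀ n : ℤ, Odd n → q n = b * q (n - 1) + q (n - 2))
    (α β : ℝ)
    (hα : α = (a * b + Real.sqrt (a ^ 2 * b ^ 2 + 4 * (a * b))) / 2)
    (hβ : β = (a * b - Real.sqrt (a ^ 2 * b ^ 2 + 4 * (a * b))) / 2) :
    ∀ n r : ℕ, r ≤ n → 1 ≤ r →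
      q (2 * (n : ℤ) - 2 * r) * q (2 * (n : ℤ) + 2 * r) - (q (2 * (n : ℤ))) ^ 2 =
        a ^ 2 * (2 * (a * b) ^ (2 * r) - α ^ (4 * r) - β ^ (4 * r)) /
          ((a * b) ^ (2 * r) * (α - β) ^ 2) := by
  set s : ℝ := a * b with hs
  have hs0 : 0 < s := mul_pos ha hb
  set D : ℝ := Real.sqrt (a ^ 2 * b ^ 2 + 4 * (a * b)) with hD
  have hD2 : D ^ 2 = s ^ 2 + 4 * s := by
    rw [hD, Real.sq_sqrt (by positivity)]; ring
  have hDpos : 0 < D := Real.sqrt_pos.mpr (by positivity)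
  have hDne : D ≠ 0 := ne_of_gt hDpos
  have hsne : s ≠ 0 := ne_of_gt hs0
  have hα2 : α ^ 2 = s * α + s := by
    rw [hα]; linear_combination (1/4 : ℝ) * hD2
  have hβ2 : β ^ 2 = s * β + s := by
    rw [hβ]; linear_combination (1/4 : ℝ) * hD2
  have hdiff : α - β = D := by rw [hα, hβ]; ring
  set c : ℝ := α ^ 2 / s with hc
  set d : ℝ := β ^ 2 / s with hd
  have hsc : s * c = α ^ 2 := by rw [hc]; field_simp
  have hsd : s * d = β ^ 2 := by rw [hd]; field_simp
  have hprod : α * β = -s := by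
    rw [hα, hβ]; linear_combination (-(1/4) : ℝ) * hD2
  have hs2ne : s ^ 2 ≠ 0 := pow_ne_zero 2 hsne
  have hcd : c * d = 1 := by
    have h : s ^ 2 * (c * d) = s ^ 2 * 1 := by
      calc s ^ 2 * (c * d) = (s * c) * (s * d) := by ring
        _ = α ^ 2 * β ^ 2 := by rw [hsc, hsd]
        _ = s ^ 2 * 1 := by linear_combination (α * β - s) * hprod
    exact mul_left_cancel₀ hs2ne h
  have keyα : α ^ 4 = (s + 2) * s * α ^ 2 - s ^ 2 := by
    linear_combination (α ^ 2 + s * α - s) * hα2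
  have keyβ : β ^ 4 = (s + 2) * s * β ^ 2 - s ^ 2 := by
    linear_combination (β ^ 2 + s * β - s) * hβ2
  have hc2 : c ^ 2 = (s + 2) * c - 1 := by
    have h : s ^ 2 * c ^ 2 = s ^ 2 * ((s + 2) * c - 1) := by
      calc s ^ 2 * c ^ 2 = (s * c) ^ 2 := by ring
        _ = α ^ 4 := by rw [hsc]; ring
        _ = (s + 2) * s * (s * c) - s ^ 2 := by rw [hsc]; exact keyα
        _ = s ^ 2 * ((s + 2) * c - 1) := by ring
    exact mul_left_cancel₀ hs2ne h
  have hd2 : d ^ 2 = (s + 2) * d - 1 := by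
    have h : s ^ 2 * d ^ 2 = s ^ 2 * ((s + 2) * d - 1) := by
      calc s ^ 2 * d ^ 2 = (s * d) ^ 2 := by ring
        _ = β ^ 4 := by rw [hsd]; ring
        _ = (s + 2) * s * (s * d) - s ^ 2 := by rw [hsd]; exact keyβ
        _ = s ^ 2 * ((s + 2) * d - 1) := by ring
    exact mul_left_cancel₀ hs2ne h
  have hcmd : c - d = D := by
    have : s * (c - d) = (α + β) * (α - β) := by
      rw [mul_sub, hsc, hsd]; ring
    have h2 : α + β = s := by rw [hα, hβ]; ring
    rw [h2, hdiff] at this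
    exact mul_left_cancel₀ hsne this
  -- even recurrence
  have hrec : ∀ m : ℤ, q (2 * m + 2) = (s + 2) * q (2 * m) - q (2 * m - 2) := by
    intro m
    have h1 := hqe (2 * m + 2) ⟨m + 1, by ring⟩
    have h2 := hqo (2 * m + 1) ⟨m, by ring⟩
    have h3 := hqe (2 * m) ⟨m, by ring⟩
    have e1 : (2 * m + 2 - 1 : ℤ) = 2 * m + 1 := by ring
    have e2 : (2 * m + 2 - 2 : ℤ) = 2 * m := by ring
    have e3 : (2 * m + 1 - 1 : ℤ) = 2 * m := by ring
    have e4 : (2 * m + 1 - 2 : ℤ) = 2 * m - 1 := by ring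
    rw [e1, e2] at h1
    rw [e3, e4] at h2
    rw [hs]
    linear_combination h1 + a * h2 - h3
  -- Binet for even indices
  have B : ∀ m : ℕ, q (2 * (m : ℤ)) = a * (c ^ m - d ^ m) / D := by
    intro m
    induction m using Nat.twoStepInduction with
    | zero => simpa using hq0
    | one =>
      have h := hqe 2 ⟨1, by ring⟩
      norm_num at h
      rw [hq1, hq0] at h
      have : (2 : ℤ) = 2 * ((1 : ℕ) : ℤ) := by norm_num
      rw [← this]  -- goal q 2 = ...
      rw [h, pow_one, pow_one, hcmd]
      field_simp
      ring
    | more m ih1 ih2 =>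
      have h := hrec ((m : ℤ) + 1)
      have e1 : (2 * ((m : ℤ) + 1) + 2) = 2 * ((m + 2 : ℕ) : ℤ) := by push_cast; ring
      have e2 : (2 * ((m : ℤ) + 1)) = 2 * ((m + 1 : ℕ) : ℤ) := by push_cast; ring
      have e3 : (2 * ((m : ℤ) + 1) - 2) = 2 * ((m : ℕ) : ℤ) := by push_cast; ring
      rw [e1, e3, e2, ih1, ih2] at h
      rw [h]
      have pc : c ^ (m + 2) = c ^ m * c ^ 2 := by ring
      have pd : d ^ (m + 2) = d ^ m * d ^ 2 := by ring
      rw [pc, pd, hc2, hd2]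
      field_simp
      ring
  have key : ∀ X Y P Q : ℝ, X * Y = 1 → P * Q = 1 →
      (X - Y) * (X * P ^ 2 - Y * Q ^ 2) - (X * P - Y * Q) ^ 2 = 2 - P ^ 2 - Q ^ 2 := by
    intro X Y P Q h1 h2
    linear_combination (2 * P * Q - P ^ 2 - Q ^ 2) * h1 + 2 * h2
  intro n r hrn hr1
  have e1 : (2 * (n : ℤ) - 2 * r) = 2 * ((n - r : ℕ) : ℤ) := by
    push_cast [Nat.cast_sub hrn]; ring
  have e2 : (2 * (n : ℤ) + 2 * r) = 2 * ((n + r : ℕ) : ℤ) := by push_cast; ring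
  rw [e1, e2, B (n - r), B (n + r), B n]
  set k : ℕ := n - r with hk
  have hn : n = k + r := by omega
  have hnr : n + r = k + 2 * r := by omega
  have hα4 : α ^ (4 * r) = s ^ (2 * r) * c ^ (2 * r) := by
    rw [show 4 * r = 2 * (2 * r) by ring, pow_mul, ← hsc, mul_pow]
  have hβ4 : β ^ (4 * r) = s ^ (2 * r) * d ^ (2 * r) := by
    rw [show 4 * r = 2 * (2 * r) by ring, pow_mul, ← hsd, mul_pow]
  rw [hα4, hβ4, hdiff, hnr, hn]
  have hXY : c ^ k * d ^ k = 1 := by rw [← mul_pow, hcd, one_pow]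
  have hPQ : c ^ r * d ^ r = 1 := by rw [← mul_pow, hcd, one_pow]
  have p1 : c ^ (k + 2 * r) = c ^ k * (c ^ r) ^ 2 := by
    rw [pow_add, show 2 * r = r * 2 by ring, pow_mul]
  have p2 : d ^ (k + 2 * r) = d ^ k * (d ^ r) ^ 2 := by
    rw [pow_add, show 2 * r = r * 2 by ring, pow_mul]
  have p3 : c ^ (k + r) = c ^ k * c ^ r := pow_add c k r
  have p4 : d ^ (k + r) = d ^ k * d ^ r := pow_add d k r
  have p5 : c ^ (2 * r) = (c ^ r) ^ 2 := by rw [show 2 * r = r * 2 by ring, pow_mul]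
  have p6 : d ^ (2 * r) = (d ^ r) ^ 2 := by rw [show 2 * r = r * 2 by ring, pow_mul]
  rw [p1, p2, p3, p4, p5, p6]
  have hk2 := key (c ^ k) (d ^ k) (c ^ r) (d ^ r) hXY hPQ
  have hs2r : (s : ℝ) ^ (2 * r) ≠ 0 := pow_ne_zero _ hsne
  calc a * (c ^ k - d ^ k) / D * (a * (c ^ k * (c ^ r) ^ 2 - d ^ k * (d ^ r) ^ 2) / D) -
        (a * (c ^ k * c ^ r - d ^ k * d ^ r) / D) ^ 2
      = a ^ 2 * ((c ^ k - d ^ k) * (c ^ k * (c ^ r) ^ 2 - d ^ k * (d ^ r) ^ 2) -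
          (c ^ k * c ^ r - d ^ k * d ^ r) ^ 2) / D ^ 2 := by ring
    _ = a ^ 2 * (2 - (c ^ r) ^ 2 - (d ^ r) ^ 2) / D ^ 2 := by rw [hk2]
    _ = a ^ 2 * (2 * s ^ (2 * r) - s ^ (2 * r) * (c ^ r) ^ 2 - s ^ (2 * r) * (d ^ r) ^ 2) /
          (s ^ (2 * r) * D ^ 2) := by
        rw [div_eq_div_iff (by positivity) (by positivity)]
        ring
end

section
/- For all real numbers a, b and every natural number n ≥ 1, the bi-periodic Fibonacci numbers satisfy the Cassini-like identity q (2n−2) * q (2n+2) − (q (2n))² = −a². (This is the scalar analogue of the Cassini-like corollary obtained from Theorem 2.2 with r = 1.) -/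
theorem biperiodic_fib_cassini (a b : ℝ)
    (q : ℤ → ℝ) (hq0 : q 0 = 0) (hq1 : q 1 = 1)
    (hqe : ∀ n : ℤ, Even n → q n = a * q (n - 1) + q (n - 2))
    (hqo : ∀ n : ℤ, Odd n → q n = b * q (n - 1) + q (n - 2)) :
    ∀ n : ℕ, 1 ≤ n →
      q (2 * (n : ℤ) - 2) * q (2 * (n : ℤ) + 2) - (q (2 * (n : ℤ))) ^ 2 = -a ^ 2 := by
  have key : ∀ n : ℕ, a * b * q (2 * (n:ℤ)) * q (2 * (n:ℤ) + 1)
      + b * (q (2 * (n:ℤ)))^2 - a * (q (2 * (n:ℤ) + 1))^2 = -a := by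
    intro n
    induction n with
    | zero => simp [hq0, hq1]
    | succ m ih =>
      have he : q (2 * ((m:ℤ)+1)) = a * q (2 * (m:ℤ) + 1) + q (2 * (m:ℤ)) := by
        have := hqe (2 * ((m:ℤ)+1)) ⟨(m:ℤ)+1, by ring⟩
        rw [this]; ring_nf
      have ho : q (2 * ((m:ℤ)+1) + 1) = b * q (2 * ((m:ℤ)+1)) + q (2 * (m:ℤ) + 1) := by
        have := hqo (2 * ((m:ℤ)+1) + 1) ⟨(m:ℤ)+1, by ring⟩
        rw [this]; ring_nf
      push_cast
      rw [ho, he]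
      push_cast at ih
      nlinarith [ih]
  intro n hn
  obtain ⟨m, rfl⟩ : ∃ m : ℕ, n = m + 1 := ⟨n - 1, by omega⟩
  have hm := key m
  have he : q (2 * ((m:ℤ)+1)) = a * q (2 * (m:ℤ) + 1) + q (2 * (m:ℤ)) := by
    have := hqe (2 * ((m:ℤ)+1)) ⟨(m:ℤ)+1, by ring⟩
    rw [this]; ring_nf
  have ho : q (2 * ((m:ℤ)+1) + 1) = b * q (2 * ((m:ℤ)+1)) + q (2 * (m:ℤ) + 1) := by
    have := hqo (2 * ((m:ℤ)+1) + 1) ⟨(m:ℤ)+1, by ring⟩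
    rw [this]; ring_nf
  have he2 : q (2 * ((m:ℤ)+1) + 2) = a * q (2 * ((m:ℤ)+1) + 1) + q (2 * ((m:ℤ)+1)) := by
    have := hqe (2 * ((m:ℤ)+1) + 2) ⟨(m:ℤ)+2, by ring⟩
    rw [this]; ring_nf
  push_cast
  rw [show (2 * ((m:ℤ)+1) - 2) = 2 * (m:ℤ) by ring]
  rw [he2, ho, he]
  linear_combination a * hm
end

section
/- Let a, b be real numbers with a > 0 and b > 0, and let α = (a*b + √(a²b² + 4ab))/2 and β = (a*b − √(a²b² + 4ab))/2. Then for all natural numbers n, r with n ≥ r, r even, r ≥ 2 and n even, the bi-periodic Fibonacci numbers satisfy q (n−r) * q (n+r) − (q n)² = a² * (2*(a*b)^r − α^(2r) − β^(2r)) / ((a*b)^r * (α − β)²). (This is the even-n case of the scalar analogue of the paper's Catalan-type theorem for even r.) -/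
theorem biperiodic_fib_catalan_even_n (a b : ℝ) (ha : 0 < a) (hb : 0 < b)
    (q : ℤ → ℝ) (hq0 : q 0 = 0) (hq1 : q 1 = 1)
    (hqe : ∀ n : ℤ, Even n → q n = a * q (n - 1) + q (n - 2))
    (hqo : ∀ n : ℤ, Odd n → q n = b * q (n - 1) + q (n - 2))
    (α β : ℝ)
    (hα : α = (a * b + Real.sqrt (a ^ 2 * b ^ 2 + 4 * (a * b))) / 2)
    (hβ : β = (a * b - Real.sqrt (a ^ 2 * b ^ 2 + 4 * (a * b))) / 2) :
    ∀ n r : ℕ, r ≤ n → Even r → 2 ≤ r → Even n →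
      q ((n : ℤ) - r) * q ((n : ℤ) + r) - (q (n : ℤ)) ^ 2 =
        a ^ 2 * (2 * (a * b) ^ r - α ^ (2 * r) - β ^ (2 * r)) /
          ((a * b) ^ r * (α - β) ^ 2) := by
  have hab : (0:ℝ) < a * b := mul_pos ha hb
  set s : ℝ := Real.sqrt (a ^ 2 * b ^ 2 + 4 * (a * b)) with hsdef
  have hsq : s ^ 2 = a ^ 2 * b ^ 2 + 4 * (a * b) := Real.sq_sqrt (by positivity)
  have hs0 : 0 < s := Real.sqrt_pos.mpr (by positivity)
  have hD : α - β = s := by rw [hα, hβ]; ring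
  have hsum : α + β = a * b := by rw [hα, hβ]; ring
  have hprod : α * β = -(a * b) := by
    rw [hα, hβ]
    have h : (a * b + s) / 2 * ((a * b - s) / 2) = (a^2*b^2 - s^2)/4 := by ring
    rw [h, hsq]; ring
  have hα2 : α ^ 2 = a * b * α + a * b := by linear_combination α * hsum - hprod
  have hβ2 : β ^ 2 = a * b * β + a * b := by linear_combination β * hsum - hprod
  -- Binet formula for even and odd indices
  have binet : ∀ m : ℕ, q (2 * (m:ℤ)) * ((a*b)^m * s) = a * (α^(2*m) - β^(2*m)) ∧
      q (2 * (m:ℤ) + 1) * ((a*b)^m * s) = α^(2*m+1) - β^(2*m+1) := by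
    intro m
    induction m with
    | zero => simp [hq0, hq1, ← hD]
    | succ k ih =>
      obtain ⟨ih1, ih2⟩ := ih
      have e1 : q (2 * ((k:ℤ)+1)) = a * q (2*(k:ℤ)+1) + q (2*(k:ℤ)) := by
        have h := hqe (2 * ((k:ℤ)+1)) ⟨(k:ℤ)+1, by ring⟩
        rw [show 2*((k:ℤ)+1) - 1 = 2*(k:ℤ)+1 by ring,
            show 2*((k:ℤ)+1) - 2 = 2*(k:ℤ) by ring] at h
        exact h
      have e2 : q (2 * ((k:ℤ)+1) + 1) = b * q (2*((k:ℤ)+1)) + q (2*(k:ℤ)+1) := by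
        have h := hqo (2 * ((k:ℤ)+1) + 1) ⟨(k:ℤ)+1, by ring⟩
        rw [show 2*((k:ℤ)+1)+1 - 1 = 2*((k:ℤ)+1) by ring,
            show 2*((k:ℤ)+1)+1 - 2 = 2*(k:ℤ)+1 by ring] at h
        exact h
      have g1 : q (2 * ((k:ℤ)+1)) * ((a*b)^(k+1) * s) = a * (α^(2*(k+1)) - β^(2*(k+1))) := by
        rw [e1]
        linear_combination (a*(a*b)) * ih2 + (a*b) * ih1 - a*α^(2*k)*hα2 + a*β^(2*k)*hβ2
      constructor
      · push_cast
        convert g1 using 2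
      · push_cast
        rw [show 2*((k:ℤ)+1)+1 = 2 * ((k:ℤ)+1) + 1 by ring, e2]
        linear_combination b * g1 + (a*b) * ih2 - α^(2*k+1)*hα2 + β^(2*k+1)*hβ2
  intro n r hrn hre hr2 hne
  obtain ⟨m, hm⟩ := hne
  obtain ⟨u, hu⟩ := hre
  obtain ⟨t, ht⟩ : ∃ t, m = u + t := ⟨m - u, by omega⟩
  have c1 : (n:ℤ) - r = 2 * ((t:ℕ) : ℤ) := by omega
  have c2 : (n:ℤ) + r = 2 * ((t + 2*u : ℕ) : ℤ) := by push_cast; omega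
  have c3 : (n:ℤ) = 2 * ((t + u : ℕ) : ℤ) := by push_cast; omega
  have P1 := (binet t).1
  have P2 := (binet (t + 2*u)).1
  have P3 := (binet (t + u)).1
  have key : (α^(2*t) - β^(2*t)) * (α^(2*(t+2*u)) - β^(2*(t+2*u)))
      - (α^(2*(t+u)) - β^(2*(t+u)))^2
      = (a*b)^(2*t) * (2*(a*b)^(2*u) - α^(4*u) - β^(4*u)) := by
    have h1 : (α*β)^(2*t) = (a*b)^(2*t) := by
      rw [hprod, pow_mul, pow_mul, neg_pow_two]
    have h2 : (α*β)^(2*u) = (a*b)^(2*u) := by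
      rw [hprod, pow_mul, pow_mul, neg_pow_two]
    calc (α^(2*t) - β^(2*t)) * (α^(2*(t+2*u)) - β^(2*(t+2*u)))
        - (α^(2*(t+u)) - β^(2*(t+u)))^2
        = (α*β)^(2*t) * (2*(α*β)^(2*u) - α^(4*u) - β^(4*u)) := by ring
      _ = (a*b)^(2*t) * (2*(a*b)^(2*u) - α^(4*u) - β^(4*u)) := by rw [h1, h2]
  have big : (q (2*((t:ℕ):ℤ)) * q (2*((t+2*u : ℕ):ℤ)) - (q (2*((t+u : ℕ):ℤ)))^2)
      * ((a*b)^(2*t+2*u) * s^2)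
      = a^2 * ((a*b)^(2*t) * (2*(a*b)^(2*u) - α^(4*u) - β^(4*u))) := by
    calc (q (2*((t:ℕ):ℤ)) * q (2*((t+2*u : ℕ):ℤ)) - (q (2*((t+u : ℕ):ℤ)))^2)
        * ((a*b)^(2*t+2*u) * s^2)
        = (q (2*((t:ℕ):ℤ)) * ((a*b)^t * s)) * (q (2*((t+2*u : ℕ):ℤ)) * ((a*b)^(t+2*u) * s))
          - (q (2*((t+u : ℕ):ℤ)) * ((a*b)^(t+u) * s))^2 := by ring
      _ = (a * (α^(2*t) - β^(2*t))) * (a * (α^(2*(t+2*u)) - β^(2*(t+2*u))))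
          - (a * (α^(2*(t+u)) - β^(2*(t+u))))^2 := by rw [P1, P2, P3]
      _ = a^2 * ((a*b)^(2*t) * (2*(a*b)^(2*u) - α^(4*u) - β^(4*u))) := by
          linear_combination a^2 * key
  have habne : (a*b : ℝ) ≠ 0 := ne_of_gt hab
  have hsne : s ≠ 0 := ne_of_gt hs0
  rw [c1, c2, c3, hD, hu]
  rw [eq_div_iff (by positivity)]
  apply mul_left_cancel₀ (pow_ne_zero (2*t) habne)
  linear_combination big
end

section
/- Let a, b be real numbers with a > 0 and b > 0, and let α = (a*b + √(a²b² + 4ab))/2 and β = (a*b − √(a²b² + 4ab))/2. Then for all natural numbers n, r with n ≥ r, r even, r ≥ 2 and n odd, the bi-periodic Fibonacci numbers satisfy q (n−r) * q (n+r) − (q n)² = −(2*(a*b)^r − α^(2r) − β^(2r)) / ((a*b)^(r−1) * (α − β)²). (This is the odd-n case of the scalar analogue of the paper's Catalan-type theorem for even r.) -/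
lemma key_prod (A B c : ℝ) (p t : ℕ) (hAB : A * B = -c) :
    (A^(2*p+1) - B^(2*p+1)) * (A^(2*(p+2*t+2)+1) - B^(2*(p+2*t+2)+1))
      - (A^(2*(p+t+1)+1) - B^(2*(p+t+1)+1))^2
    = c^(2*p+1) * (A^(4*t+4) + B^(4*t+4)) - 2 * c^(2*(p+t+1)+1) := by
  have e1 : 2*(p+2*t+2)+1 = (2*p+1)+(4*t+4) := by ring
  have h1 : A^(2*p+1) * B^(2*(p+2*t+2)+1) = -(c^(2*p+1) * B^(4*t+4)) := by
    rw [e1]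
    have : A^(2*p+1) * B^((2*p+1)+(4*t+4)) = (A*B)^(2*p+1) * B^(4*t+4) := by
      rw [mul_pow, pow_add]; ring
    rw [this, hAB, Odd.neg_pow ⟨p, by ring⟩]
    ring
  have h2 : A^(2*(p+2*t+2)+1) * B^(2*p+1) = -(c^(2*p+1) * A^(4*t+4)) := by
    rw [e1]
    have : A^((2*p+1)+(4*t+4)) * B^(2*p+1) = (A*B)^(2*p+1) * A^(4*t+4) := by
      rw [mul_pow, pow_add]; ring
    rw [this, hAB, Odd.neg_pow ⟨p, by ring⟩]
    ring
  have h3 : A^(2*(p+t+1)+1) * B^(2*(p+t+1)+1) = -(c^(2*(p+t+1)+1)) := by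
    rw [← mul_pow, hAB, Odd.neg_pow ⟨p+t+1, by ring⟩]
  linear_combination (-1 : ℝ) * h1 + (-1 : ℝ) * h2 + 2 * h3

lemma binet_aux (a b : ℝ) (ha : 0 < a) (hb : 0 < b)
    (q : ℤ → ℝ) (hq0 : q 0 = 0) (hq1 : q 1 = 1)
    (hqe : ∀ n : ℤ, Even n → q n = a * q (n - 1) + q (n - 2))
    (hqo : ∀ n : ℤ, Odd n → q n = b * q (n - 1) + q (n - 2))
    (α β : ℝ)
    (hα : α = (a * b + Real.sqrt (a ^ 2 * b ^ 2 + 4 * (a * b))) / 2)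
    (hβ : β = (a * b - Real.sqrt (a ^ 2 * b ^ 2 + 4 * (a * b))) / 2) :
    ∀ k : ℕ, q (2*(k:ℤ)) = a * (α^(2*k) - β^(2*k)) / ((a*b)^k * (α-β)) ∧
      q (2*(k:ℤ)+1) = (α^(2*k+1) - β^(2*k+1)) / ((a*b)^k * (α-β)) := by
  have hab : (0:ℝ) < a * b := mul_pos ha hb
  have habne : (a*b : ℝ) ≠ 0 := ne_of_gt hab
  have hDnn : (0:ℝ) ≤ a ^ 2 * b ^ 2 + 4 * (a * b) := by positivity
  have hD2 : Real.sqrt (a ^ 2 * b ^ 2 + 4 * (a * b)) ^ 2 = a ^ 2 * b ^ 2 + 4 * (a * b) :=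
    Real.sq_sqrt hDnn
  have hDpos : 0 < Real.sqrt (a ^ 2 * b ^ 2 + 4 * (a * b)) := Real.sqrt_pos.mpr (by positivity)
  have hdiff : α - β = Real.sqrt (a ^ 2 * b ^ 2 + 4 * (a * b)) := by rw [hα, hβ]; ring
  have hdne : α - β ≠ 0 := by rw [hdiff]; exact ne_of_gt hDpos
  have hsum : α + β = a * b := by rw [hα, hβ]; ring
  have hprod : α * β = -(a*b) := by
    rw [hα, hβ]; linear_combination (-1/4 : ℝ) * hD2
  have hAroot : α^2 = a*b*α + a*b := by linear_combination α * hsum - hprod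
  have hBroot : β^2 = a*b*β + a*b := by linear_combination β * hsum - hprod
  intro k
  induction k with
  | zero => simp [hq0, hq1, div_self hdne]
  | succ k ih =>
    obtain ⟨ihe, iho⟩ := ih
    have hpne : ((a*b)^k : ℝ) ≠ 0 := pow_ne_zero _ habne
    have hpne1 : ((a*b)^(k+1) : ℝ) ≠ 0 := pow_ne_zero _ habne
    have hA1 : α^(2*(k+1)) = a*b*α^(2*k+1) + a*b*α^(2*k) := by
      have : α^(2*(k+1)) = α^(2*k) * α^2 := by ring
      rw [this, hAroot]; ring
    have hB1 : β^(2*(k+1)) = a*b*β^(2*k+1) + a*b*β^(2*k) := by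
      have : β^(2*(k+1)) = β^(2*k) * β^2 := by ring
      rw [this, hBroot]; ring
    have hA2 : α^(2*(k+1)+1) = a*b*α^(2*(k+1)) + a*b*α^(2*k+1) := by
      have : α^(2*(k+1)+1) = α^(2*k+1) * α^2 := by ring
      rw [this, hAroot]; ring
    have hB2 : β^(2*(k+1)+1) = a*b*β^(2*(k+1)) + a*b*β^(2*k+1) := by
      have : β^(2*(k+1)+1) = β^(2*k+1) * β^2 := by ring
      rw [this, hBroot]; ring
    have heq : q (2*((k:ℤ)+1)) = a * q (2*(k:ℤ)+1) + q (2*(k:ℤ)) := by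
      have h := hqe (2*((k:ℤ)+1)) ⟨(k:ℤ)+1, by ring⟩
      have e1 : 2*((k:ℤ)+1) - 1 = 2*(k:ℤ)+1 := by ring
      have e2 : 2*((k:ℤ)+1) - 2 = 2*(k:ℤ) := by ring
      rw [e1, e2] at h; exact h
    have hoq : q (2*((k:ℤ)+1)+1) = b * q (2*((k:ℤ)+1)) + q (2*(k:ℤ)+1) := by
      have h := hqo (2*((k:ℤ)+1)+1) ⟨(k:ℤ)+1, by ring⟩
      have e1 : 2*((k:ℤ)+1)+1 - 1 = 2*((k:ℤ)+1) := by ring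
      have e2 : 2*((k:ℤ)+1)+1 - 2 = 2*(k:ℤ)+1 := by ring
      rw [e1, e2] at h; exact h
    have push1 : (2*(((k:ℕ)+1:ℕ)):ℤ) = 2*((k:ℤ)+1) := by push_cast; ring
    have castfix : ((k:ℕ)+1 : ℕ) = k+1 := rfl
    have hE : q (2*((k:ℤ)+1)) = a * (α^(2*(k+1)) - β^(2*(k+1))) / ((a*b)^(k+1) * (α-β)) := by
      rw [heq, ihe, iho, ← mul_div_assoc, ← add_div,
        div_eq_div_iff (mul_ne_zero hpne hdne) (mul_ne_zero hpne1 hdne)]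
      linear_combination (-(a*(α-β)*(a*b)^k)) * (hA1 - hB1)
    constructor
    · rw [show ((2:ℤ) * ((k:ℕ)+1:ℕ)) = 2*((k:ℤ)+1) from by push_cast; ring]
      exact hE
    · rw [show ((2:ℤ) * ((k:ℕ)+1:ℕ) + 1) = 2*((k:ℤ)+1)+1 from by push_cast; ring]
      rw [hoq, hE, iho, ← mul_div_assoc,
        div_add_div _ _ (mul_ne_zero hpne1 hdne) (mul_ne_zero hpne hdne),
        div_eq_div_iff (by positivity) (mul_ne_zero hpne1 hdne)]
      linear_combination (-((a*b)^k*(α-β)*(a*b)^(k+1)*(α-β))) * (hA2 - hB2)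

theorem biperiodic_fib_catalan_odd_n (a b : ℝ) (ha : 0 < a) (hb : 0 < b)
    (q : ℤ → ℝ) (hq0 : q 0 = 0) (hq1 : q 1 = 1)
    (hqe : ∀ n : ℤ, Even n → q n = a * q (n - 1) + q (n - 2))
    (hqo : ∀ n : ℤ, Odd n → q n = b * q (n - 1) + q (n - 2))
    (α β : ℝ)
    (hα : α = (a * b + Real.sqrt (a ^ 2 * b ^ 2 + 4 * (a * b))) / 2)
    (hβ : β = (a * b - Real.sqrt (a ^ 2 * b ^ 2 + 4 * (a * b))) / 2) :
    ∀ n r : ℕ, r ≤ n → Even r → 2 ≤ r → Odd n →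
      q ((n : ℤ) - r) * q ((n : ℤ) + r) - (q (n : ℤ)) ^ 2 =
        -((2 * (a * b) ^ r - α ^ (2 * r) - β ^ (2 * r)) /
          ((a * b) ^ (r - 1) * (α - β) ^ 2)) := by
  have hab : (0:ℝ) < a * b := mul_pos ha hb
  have habne : (a*b : ℝ) ≠ 0 := ne_of_gt hab
  have hDnn : (0:ℝ) ≤ a ^ 2 * b ^ 2 + 4 * (a * b) := by positivity
  have hD2 : Real.sqrt (a ^ 2 * b ^ 2 + 4 * (a * b)) ^ 2 = a ^ 2 * b ^ 2 + 4 * (a * b) :=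
    Real.sq_sqrt hDnn
  have hDpos : 0 < Real.sqrt (a ^ 2 * b ^ 2 + 4 * (a * b)) := Real.sqrt_pos.mpr (by positivity)
  have hdiff : α - β = Real.sqrt (a ^ 2 * b ^ 2 + 4 * (a * b)) := by rw [hα, hβ]; ring
  have hdne : α - β ≠ 0 := by rw [hdiff]; exact ne_of_gt hDpos
  have hprod : α * β = -(a*b) := by
    rw [hα, hβ]; linear_combination (-1/4 : ℝ) * hD2
  have binet := binet_aux a b ha hb q hq0 hq1 hqe hqo α β hα hβ
  intro n r hrn hre hr2 hno
  obtain ⟨m, hm⟩ := hno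
  obtain ⟨s, hs⟩ := hre
  -- r = s + s, n = 2*m+1, 1 ≤ s, s ≤ m
  obtain ⟨t, rfl⟩ : ∃ t, s = t + 1 := ⟨s - 1, by omega⟩
  obtain ⟨p, hp⟩ : ∃ p, m = p + t + 1 := ⟨m - t - 1, by omega⟩
  have B1 := (binet p).2
  have B2 := (binet (p+2*t+2)).2
  have B3 := (binet (p+t+1)).2
  have c1 : (n:ℤ) - r = 2*((p:ℕ):ℤ)+1 := by
    have : n = 2*(p+t+1)+1 := by omega
    subst this
    have : r = 2*(t+1) := by omega
    subst this
    push_cast; ring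
  have c2 : (n:ℤ) + r = 2*(((p+2*t+2:ℕ)):ℤ)+1 := by
    have : n = 2*(p+t+1)+1 := by omega
    subst this
    have : r = 2*(t+1) := by omega
    subst this
    push_cast; ring
  have c3 : (n:ℤ) = 2*(((p+t+1:ℕ)):ℤ)+1 := by
    have : n = 2*(p+t+1)+1 := by omega
    subst this
    push_cast; ring
  have hr' : r = 2*(t+1) := by omega
  have hr1 : r - 1 = 2*t+1 := by omega
  rw [c1, c2, c3, B1, B2, B3, hr1, hr']
  have K := key_prod α β (a*b) p t hprod
  have hpne1 : ((a*b)^p : ℝ) ≠ 0 := pow_ne_zero _ habne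
  have hpne2 : ((a*b)^(p+2*t+2) : ℝ) ≠ 0 := pow_ne_zero _ habne
  have hpne3 : ((a*b)^(p+t+1) : ℝ) ≠ 0 := pow_ne_zero _ habne
  rw [div_mul_div_comm, div_pow,
    div_sub_div _ _ (by positivity) (by positivity), ← neg_div,
    div_eq_div_iff (by positivity) (by positivity)]
  linear_combination ((a*b)^(2*t+1) * (α-β)^2 * ((a*b)^(p+t+1)*(α-β))^2) * K
end

section
/- For all real numbers a, b and all natural numbers n and even natural numbers r with n odd and n ≥ r, the bi-periodic Fibonacci and Lucas numbers satisfy (a*b + 4) * (q (n−r) * q (n+r) − (q n)²) = l (2r) − 2. (This is the denominator-free Lucas-number form of the odd-n case of the paper's Catalan-type theorem for even r, valid for all real a, b.) -/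
noncomputable def chU (t : ℝ) : ℕ → ℝ
  | 0 => 0
  | 1 => 1
  | (k+2) => t * chU t (k+1) - chU t k

noncomputable def chW (t : ℝ) : ℕ → ℝ
  | 0 => 1
  | 1 => 0
  | (k+2) => t * chW t (k+1) - chW t k

lemma ch_rep (t : ℝ) (x : ℕ → ℝ) (hx : ∀ k, x (k+2) = t * x (k+1) - x k) :
    ∀ k, x k = x 0 * chW t k + x 1 * chU t k := by
  intro k
  induction k using Nat.twoStepInduction with
  | zero => simp [chU, chW]
  | one => simp [chU, chW]
  | more k ih1 ih2 => rw [hx k, ih1, ih2]; simp [chU, chW]; ring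

lemma chU_succ (t : ℝ) : ∀ j, chU t (j+1) = chW t j + t * chU t j := by
  intro j
  induction j using Nat.twoStepInduction with
  | zero => simp [chU, chW]
  | one => simp [chU, chW]
  | more k ih1 ih2 =>
    show chU t (k+3) = chW t (k+2) + t * chU t (k+2)
    rw [show k+3 = (k+1)+2 from rfl]
    simp only [chU, chW]
    rw [show chU t (k+2) = t * chU t (k+1) - chU t k from rfl] at ih2
    linear_combination (-1:ℝ)*ih1 + t*ih2

lemma ch_wron (t : ℝ) : ∀ j, chW t j * chU t (j+1) - chW t (j+1) * chU t j = 1 := by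
  intro j
  induction j with
  | zero => simp [chU, chW]
  | succ k ih =>
    have hU : chU t (k+2) = t * chU t (k+1) - chU t k := rfl
    have hW : chW t (k+2) = t * chW t (k+1) - chW t k := rfl
    rw [hU, hW]
    linear_combination ih

lemma chW_succ (t : ℝ) (j : ℕ) : chW t (j+1) = - chU t j := by
  have h := chU_succ t (j+1)
  have h2 : chU t (j+2) = t * chU t (j+1) - chU t j := rfl
  linarith [h, h2]

lemma ch_rep_shift (t : ℝ) (x : ℕ → ℝ) (hx : ∀ k, x (k+2) = t * x (k+1) - x k) (d k : ℕ) :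
    x (d + k) = x d * chW t k + x (d+1) * chU t k := by
  have h := ch_rep t (fun k => x (d+k)) (fun k => by
    show x (d+(k+2)) = t * x (d+(k+1)) - x (d+k)
    rw [show d+(k+2) = (d+k)+2 by ring, show d+(k+1)=(d+k)+1 by ring]
    exact hx (d+k)) k
  simpa using h

theorem biperiodic_fib_catalan_odd_n_lucas_form (a b : ℝ)
    (q : ℤ → ℝ) (hq0 : q 0 = 0) (hq1 : q 1 = 1)
    (hqe : ∀ n : ℤ, Even n → q n = a * q (n - 1) + q (n - 2))
    (hqo : ∀ n : ℤ, Odd n → q n = b * q (n - 1) + q (n - 2))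
    (l : ℤ → ℝ) (hl0 : l 0 = 2) (hl1 : l 1 = a)
    (hle : ∀ n : ℤ, Even n → l n = b * l (n - 1) + l (n - 2))
    (hlo : ∀ n : ℤ, Odd n → l n = a * l (n - 1) + l (n - 2)) :
    ∀ n r : ℕ, Even r → Odd n → r ≤ n →
      (a * b + 4) * (q ((n : ℤ) - r) * q ((n : ℤ) + r) - (q (n : ℤ)) ^ 2) =
        l (2 * r) - 2 := by
  -- step-2 recurrence for q
  have hq2 : ∀ m : ℤ, q (m+2) = (a*b+2) * q m - q (m-2) := by
    intro m
    rcases Int.even_or_odd m with hm | hm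
    · have h1 := hqe (m+2) (by exact hm.add even_two)
      have h2 := hqo (m+1) (Even.add_one hm)
      have h3 := hqe m hm
      rw [show m+2-1 = m+1 by ring, show m+2-2 = m by ring] at h1
      rw [show m+1-1 = m by ring, show m+1-2 = m-1 by ring] at h2
      linear_combination h1 + a*h2 - h3
    · have h1 := hqo (m+2) (by simpa using hm.add_even even_two)
      have h2 := hqe (m+1) (Odd.add_one hm)
      have h3 := hqo m hm
      rw [show m+2-1 = m+1 by ring, show m+2-2 = m by ring] at h1
      rw [show m+1-1 = m by ring, show m+1-2 = m-1 by ring] at h2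
      linear_combination h1 + b*h2 - h3
  -- step-2 recurrence for l
  have hl2 : ∀ m : ℤ, l (m+2) = (a*b+2) * l m - l (m-2) := by
    intro m
    rcases Int.even_or_odd m with hm | hm
    · have h1 := hle (m+2) (by exact hm.add even_two)
      have h2 := hlo (m+1) (Even.add_one hm)
      have h3 := hle m hm
      rw [show m+2-1 = m+1 by ring, show m+2-2 = m by ring] at h1
      rw [show m+1-1 = m by ring, show m+1-2 = m-1 by ring] at h2
      linear_combination h1 + b*h2 - h3
    · have h1 := hlo (m+2) (by simpa using hm.add_even even_two)
      have h2 := hle (m+1) (Odd.add_one hm)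
      have h3 := hlo m hm
      rw [show m+2-1 = m+1 by ring, show m+2-2 = m by ring] at h1
      rw [show m+1-1 = m by ring, show m+1-2 = m-1 by ring] at h2
      linear_combination h1 + a*h2 - h3
  set t : ℝ := a*b+2 with ht
  set P : ℕ → ℝ := fun k => q (2*(k:ℤ)+1) with hPdef
  set M : ℕ → ℝ := fun k => l (2*(k:ℤ)) with hMdef
  have hP : ∀ k : ℕ, P (k+2) = t * P (k+1) - P k := by
    intro k
    have h := hq2 (2*(k:ℤ)+3)
    rw [show (2*(k:ℤ)+3)+2 = 2*((k:ℤ)+2)+1 by ring,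
        show (2*(k:ℤ)+3)-2 = 2*(k:ℤ)+1 by ring,
        show (2*(k:ℤ)+3) = 2*((k:ℤ)+1)+1 by ring] at h
    simp only [hPdef]
    push_cast
    convert h using 3
  have hM : ∀ k : ℕ, M (k+2) = t * M (k+1) - M k := by
    intro k
    have h := hl2 (2*(k:ℤ)+2)
    rw [show (2*(k:ℤ)+2)+2 = 2*((k:ℤ)+2) by ring,
        show (2*(k:ℤ)+2)-2 = 2*(k:ℤ) by ring,
        show (2*(k:ℤ)+2) = 2*((k:ℤ)+1) by ring] at h
    simp only [hMdef]
    push_cast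
    convert h using 3
  have hP0 : P 0 = 1 := by simp only [hPdef]; norm_num [hq1]
  have hP1 : P 1 = a*b+1 := by
    have h2 := hqe 2 (by decide)
    have h3 := hqo 3 (by decide)
    norm_num at h2 h3
    simp only [hPdef]
    norm_num
    rw [h3, h2, hq0, hq1]
    ring
  have hM0 : M 0 = 2 := by simp only [hMdef]; norm_num [hl0]
  have hM1 : M 1 = t := by
    have h2 := hle 2 (by decide)
    norm_num at h2
    simp only [hMdef]
    norm_num
    rw [h2, hl0, hl1, ht]
    ring
  have hEP : ∀ d : ℕ, P d ^2 + P (d+1)^2 - t * P d * P (d+1) = -(a*b) := by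
    intro d
    induction d with
    | zero => rw [hP0, hP1, ht]; ring
    | succ k ih =>
      have h := hP k
      rw [show k+1+1 = k+2 from rfl, h]
      linear_combination ih
  have key : ∀ d j : ℕ,
      (a*b+4) * (P d * P (d + (j+j)) - P (d+j)^2) = M (j+j) - 2 := by
    intro d j
    have h1 := ch_rep_shift t P hP d (j+j)
    have h2 := ch_rep_shift t P hP d j
    have h3 := ch_rep_shift t (chU t) (fun k => rfl) j j
    have h4 := ch_rep_shift t (chW t) (fun k => rfl) j j
    have h5 := ch_rep_shift t M hM 0 (j+j)
    rw [Nat.zero_add] at h5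
    norm_num at h5
    have h6 := chU_succ t j
    have h7 := chW_succ t j
    have h8 := ch_wron t j
    have h9 := hEP d
    rw [h6] at h3 h8
    rw [h7] at h4 h8
    rw [h3, h4] at h1 h5
    rw [h1, h2, h5, hM0, hM1]
    linear_combination (-(a*b+4) * chU t j ^ 2) * h9 + (-2) * h8 + (chU t j^2 * (a*b) + 2*chW t j^2 + 2*t*chU t j*chW t j + 2*chU t j^2 - 2) * ht
  intro n r hre hno hrn
  obtain ⟨j, hj⟩ := hre
  obtain ⟨m, hm⟩ := hno
  obtain ⟨d, hd⟩ : ∃ d, m = j + d := ⟨m - j, by omega⟩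
  subst hd hm hj
  have t1 : q (((2*(j+d)+1 : ℕ) : ℤ) - ((j+j : ℕ) : ℤ)) = P d := by
    show _ = q (2*(d:ℤ)+1)
    congr 1; push_cast; ring
  have t2 : q (((2*(j+d)+1 : ℕ) : ℤ) + ((j+j : ℕ) : ℤ)) = P (d + (j+j)) := by
    show _ = q (2*((d + (j+j) : ℕ):ℤ)+1)
    congr 1; push_cast; ring
  have t3 : q (((2*(j+d)+1 : ℕ) : ℤ)) = P (d + j) := by
    show _ = q (2*((d + j : ℕ):ℤ)+1)
    congr 1; push_cast; ring
  have t4 : l (2 * ((j+j : ℕ) : ℤ)) = M (j+j) := rfl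
  rw [t1, t2, t3, t4]
  exact key d j
end

section
/- For all nonzero real numbers a, b and every natural number n, the bi-periodic Fibonacci numbers satisfy the summation formula ∑_{r=0}^{n−1} q r = (q (n+1) + q n − q (n−1) − q (n−2)) / (a*b) − 1/b. (This is the scalar component of the paper's summation theorem, part (i).) -/
theorem biperiodic_fib_sum (a b : ℝ) (ha : a ≠ 0) (hb : b ≠ 0)
    (q : ℤ → ℝ) (hq0 : q 0 = 0) (hq1 : q 1 = 1)
    (hqe : ∀ n : ℤ, Even n → q n = a * q (n - 1) + q (n - 2))
    (hqo : ∀ n : ℤ, Odd n → q n = b * q (n - 1) + q (n - 2)) :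
    ∀ n : ℕ, ∑ r ∈ Finset.range n, q r =
      (q ((n : ℤ) + 1) + q (n : ℤ) - q ((n : ℤ) - 1) - q ((n : ℤ) - 2)) / (a * b)
        - 1 / b := by
  have qm1 : q (-1) = 1 := by
    have h := hqo 1 odd_one
    norm_num [hq0, hq1] at h
    linarith
  have qm2 : q (-2) = -a := by
    have h := hqe 0 Even.zero
    norm_num [hq0, qm1] at h
    linarith
  have key : ∀ n : ℤ, q (n + 2) = a * b * q n + 2 * q n - q (n - 2) := by
    intro n
    rcases Int.even_or_odd n with he | ho
    · have h2 := hqe (n + 2) (he.add (by decide : Even (2 : ℤ)))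
      have h1 := hqo (n + 1) he.add_one
      have h0 := hqe n he
      simp only [show n + 2 - 1 = n + 1 from by ring, show n + 2 - 2 = n from by ring,
        show n + 1 - 1 = n from by ring, show n + 1 - 2 = n - 1 from by ring] at h2 h1
      linear_combination h2 + a * h1 - h0
    · have h2 := hqo (n + 2) (ho.add_even (by decide : Even (2 : ℤ)))
      have h1 := hqe (n + 1) ho.add_one
      have h0 := hqo n ho
      simp only [show n + 2 - 1 = n + 1 from by ring, show n + 2 - 2 = n from by ring,
        show n + 1 - 1 = n from by ring, show n + 1 - 2 = n - 1 from by ring] at h2 h1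
      linear_combination h2 + b * h1 - h0
  intro n
  induction n with
  | zero =>
      norm_num [hq0, hq1, qm1, qm2]
      field_simp
      ring
  | succ n ih =>
      rw [Finset.sum_range_succ, ih]
      push_cast
      have k := key n
      simp only [show (n : ℤ) + 1 + 1 = n + 2 from by ring,
        show (n : ℤ) + 1 - 1 = (n : ℤ) from by ring,
        show (n : ℤ) + 1 - 2 = (n : ℤ) - 1 from by ring]
      field_simp
      linear_combination (-1) * k
end

section
/- For all nonzero real numbers a, b and every natural number n, the even-indexed bi-periodic Fibonacci numbers satisfy the summation formula ∑_{r=0}^{n−1} q (2r) = (q (2n) − q (2n−2)) / (a*b) − 1/b. (This is the scalar component of the paper's summation theorem, part (ii).) -/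
theorem biperiodic_fib_sum_even (a b : ℝ) (ha : a ≠ 0) (hb : b ≠ 0)
    (q : ℤ → ℝ) (hq0 : q 0 = 0) (hq1 : q 1 = 1)
    (hqe : ∀ n : ℤ, Even n → q n = a * q (n - 1) + q (n - 2))
    (hqo : ∀ n : ℤ, Odd n → q n = b * q (n - 1) + q (n - 2)) :
    ∀ n : ℕ, ∑ r ∈ Finset.range n, q (2 * r) =
      (q (2 * (n : ℤ)) - q (2 * (n : ℤ) - 2)) / (a * b) - 1 / b := by
  have hab : a * b ≠ 0 := mul_ne_zero ha hb
  intro n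
  induction n with
  | zero =>
    have h1 := hqo 1 ⟨0, by ring⟩
    have h0 := hqe 0 ⟨0, by ring⟩
    norm_num [hq0, hq1] at h1 h0
    have hm1 : q (-1) = 1 := by linarith
    rw [hm1] at h0
    have hm2 : q (-2) = -a := by linarith
    simp only [Nat.cast_zero, mul_zero, Finset.range_zero, Finset.sum_empty, zero_sub]
    rw [hq0, hm2]
    field_simp
    ring
  | succ n ih =>
    rw [Finset.sum_range_succ, ih]
    push_cast
    have e1 := hqe (2 * (n : ℤ) + 2) ⟨(n : ℤ) + 1, by ring⟩
    have e2 := hqo (2 * (n : ℤ) + 1) ⟨(n : ℤ), by ring⟩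
    have e3 := hqe (2 * (n : ℤ)) ⟨(n : ℤ), by ring⟩
    have r1 : (2 * (n : ℤ) + 2 - 1) = 2 * (n : ℤ) + 1 := by ring
    have r2 : (2 * (n : ℤ) + 2 - 2) = 2 * (n : ℤ) := by ring
    have r3 : (2 * (n : ℤ) + 1 - 1) = 2 * (n : ℤ) := by ring
    have r4 : (2 * (n : ℤ) + 1 - 2) = 2 * (n : ℤ) - 1 := by ring
    have h2 : (2 * ((n : ℤ) + 1)) = 2 * (n : ℤ) + 2 := by ring
    have h3 : (2 * ((n : ℤ) + 1) - 2) = 2 * (n : ℤ) := by ring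
    rw [r1, r2] at e1
    rw [r3, r4] at e2
    rw [h3, h2, e1, e2, e3]
    field_simp
    ring
end

section
/- For all nonzero real numbers a, b and every natural number n, the odd-indexed bi-periodic Fibonacci numbers satisfy the summation formula ∑_{r=0}^{n−1} q (2r+1) = (q (2n+1) − q (2n−1)) / (a*b). (This is the scalar component of the paper's summation theorem, part (iii).) -/
theorem biperiodic_fib_sum_odd (a b : ℝ) (ha : a ≠ 0) (hb : b ≠ 0)
    (q : ℤ → ℝ) (hq0 : q 0 = 0) (hq1 : q 1 = 1)
    (hqe : ∀ n : ℤ, Even n → q n = a * q (n - 1) + q (n - 2))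
    (hqo : ∀ n : ℤ, Odd n → q n = b * q (n - 1) + q (n - 2)) :
    ∀ n : ℕ, ∑ r ∈ Finset.range n, q (2 * r + 1) =
      (q (2 * (n : ℤ) + 1) - q (2 * (n : ℤ) - 1)) / (a * b) := by
  intro n
  induction n with
  | zero =>
    have h := hqo 1 ⟨0, by ring⟩
    norm_num [hq0, hq1] at h ⊢
    rw [← h]
    simp
  | succ n ih =>
    rw [Finset.sum_range_succ, ih]
    have h1 := hqo (2 * (n : ℤ) + 3) ⟨(n : ℤ) + 1, by ring⟩
    have h2 := hqe (2 * (n : ℤ) + 2) ⟨(n : ℤ) + 1, by ring⟩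
    have h3 := hqo (2 * (n : ℤ) + 1) ⟨(n : ℤ), by ring⟩
    push_cast
    have e1 : (2 * ((n : ℤ) + 1) + 1) = 2 * (n : ℤ) + 3 := by ring
    have e2 : (2 * ((n : ℤ) + 1) - 1) = 2 * (n : ℤ) + 1 := by ring
    rw [e1, e2]
    have e3 : (2 * (n : ℤ) + 3 - 1) = 2 * (n : ℤ) + 2 := by ring
    have e4 : (2 * (n : ℤ) + 3 - 2) = 2 * (n : ℤ) + 1 := by ring
    have e5 : (2 * (n : ℤ) + 2 - 1) = 2 * (n : ℤ) + 1 := by ring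
    have e6 : (2 * (n : ℤ) + 2 - 2) = 2 * (n : ℤ) := by ring
    have e7 : (2 * (n : ℤ) + 1 - 1) = 2 * (n : ℤ) := by ring
    have e8 : (2 * (n : ℤ) + 1 - 2) = 2 * (n : ℤ) - 1 := by ring
    rw [e3, e4] at h1
    rw [e5, e6] at h2
    rw [e7, e8] at h3
    rw [h1, h2, h3]
    field_simp
    ring
end

section
/- For all real numbers a, b, every even integer n, and every integer s, the bi-periodic Fibonacci and Lucas numbers satisfy q (n+s) + (−1)^(s−1) * q (n−s) = l n * q s. (This identity is the componentwise content of part (v) of the paper's Proposition: for even n, O_n + O_{−n} = l_n · O_0 holds coefficientwise.) -/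
theorem twoStepInt {P : ℤ → Prop} (h0 : P 0) (h1 : P 1)
    (hf : ∀ s : ℤ, P (s - 1) → P s → P (s + 1))
    (hb : ∀ s : ℤ, P s → P (s + 1) → P (s - 1)) : ∀ s, P s := by
  have key : ∀ s : ℤ, P s ∧ P (s + 1) := by
    intro s
    induction s using Int.induction_on with
    | zero => exact ⟨h0, h1⟩
    | succ k ih =>
      refine ⟨ih.2, ?_⟩
      have := hf (k + 1) (by simpa using ih.1) ih.2
      exact this
    | pred k ih =>
      have h := hb (-k) ih.1 (by simpa using ih.2)
      refine ⟨h, ?_⟩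
      rw [show (-(k:ℤ) - 1 + 1) = -(k:ℤ) by ring]
      exact ih.1
  exact fun s => (key s).1

theorem biperiodic_fib_add_neg (a b : ℝ)
    (q : ℤ → ℝ) (hq0 : q 0 = 0) (hq1 : q 1 = 1)
    (hqe : ∀ n : ℤ, Even n → q n = a * q (n - 1) + q (n - 2))
    (hqo : ∀ n : ℤ, Odd n → q n = b * q (n - 1) + q (n - 2))
    (l : ℤ → ℝ) (hl0 : l 0 = 2) (hl1 : l 1 = a)
    (hle : ∀ n : ℤ, Even n → l n = b * l (n - 1) + l (n - 2))
    (hlo : ∀ n : ℤ, Odd n → l n = a * l (n - 1) + l (n - 2)) :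
    ∀ n : ℤ, Even n → ∀ s : ℤ,
      q (n + s) + (-1 : ℝ) ^ (s - 1) * q (n - s) = l n * q s := by
  -- auxiliary identity: q(m+1) + q(m-1) = l m for all m
  have hA : ∀ m : ℤ, q (m + 1) + q (m - 1) = l m := by
    apply twoStepInt (P := fun m => q (m + 1) + q (m - 1) = l m)
    · -- m = 0
      have h := hqo 1 ⟨0, by ring⟩
      rw [show (1:ℤ) - 1 = 0 by ring, show (1:ℤ) - 2 = -1 by ring] at h
      simp only [zero_add, zero_sub]
      rw [hl0]
      rw [hq0] at h
      linarith [hq1, h]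
    · -- m = 1
      have h := hqe 2 ⟨1, by ring⟩
      rw [show (2:ℤ) - 1 = 1 by ring, show (2:ℤ) - 2 = 0 by ring] at h
      rw [show (1:ℤ) + 1 = 2 by ring, show (1:ℤ) - 1 = 0 by ring, hl1]
      rw [hq0, hq1] at h
      rw [hq0]
      linarith
    · intro m hPm1 hPm
      rw [show m - 1 + 1 = m by ring, show m - 1 - 1 = m - 2 by ring] at hPm1
      rw [show m + 1 + 1 = m + 2 by ring, show m + 1 - 1 = m by ring]
      rcases Int.even_or_odd m with hm | hm
      · have r1 := hqe (m + 2) (by obtain ⟨x, hx⟩ := hm; exact ⟨x + 1, by omega⟩)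
        rw [show m + 2 - 1 = m + 1 by ring, show m + 2 - 2 = m by ring] at r1
        have rq := hqe m hm
        have rl := hlo (m + 1) (by obtain ⟨x, hx⟩ := hm; exact ⟨x, by omega⟩)
        rw [show m + 1 - 1 = m by ring, show m + 1 - 2 = m - 1 by ring] at rl
        linear_combination a * hPm + hPm1 + r1 + rq - rl
      · have r1 := hqo (m + 2) (by obtain ⟨x, hx⟩ := hm; exact ⟨x + 1, by omega⟩)
        rw [show m + 2 - 1 = m + 1 by ring, show m + 2 - 2 = m by ring] at r1
        have rq := hqo m hm
        have rl := hle (m + 1) (by obtain ⟨x, hx⟩ := hm; exact ⟨x + 1, by omega⟩)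
        rw [show m + 1 - 1 = m by ring, show m + 1 - 2 = m - 1 by ring] at rl
        linear_combination b * hPm + hPm1 + r1 + rq - rl
    · intro m hPm hPm1
      rw [show m + 1 + 1 = m + 2 by ring, show m + 1 - 1 = m by ring] at hPm1
      rw [show m - 1 + 1 = m by ring, show m - 1 - 1 = m - 2 by ring]
      rcases Int.even_or_odd m with hm | hm
      · have r1 := hqe (m + 2) (by obtain ⟨x, hx⟩ := hm; exact ⟨x + 1, by omega⟩)
        rw [show m + 2 - 1 = m + 1 by ring, show m + 2 - 2 = m by ring] at r1
        have rq := hqe m hm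
        have rl := hlo (m + 1) (by obtain ⟨x, hx⟩ := hm; exact ⟨x, by omega⟩)
        rw [show m + 1 - 1 = m by ring, show m + 1 - 2 = m - 1 by ring] at rl
        linear_combination hPm1 - a * hPm - r1 - rq + rl
      · have r1 := hqo (m + 2) (by obtain ⟨x, hx⟩ := hm; exact ⟨x + 1, by omega⟩)
        rw [show m + 2 - 1 = m + 1 by ring, show m + 2 - 2 = m by ring] at r1
        have rq := hqo m hm
        have rl := hle (m + 1) (by obtain ⟨x, hx⟩ := hm; exact ⟨x + 1, by omega⟩)
        rw [show m + 1 - 1 = m by ring, show m + 1 - 2 = m - 1 by ring] at rl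
        linear_combination hPm1 - b * hPm - r1 - rq + rl
  intro n hn
  have hne : (-1 : ℝ) ≠ 0 := by norm_num
  apply twoStepInt (P := fun s => q (n + s) + (-1 : ℝ) ^ (s - 1) * q (n - s) = l n * q s)
  · simp only [add_zero, sub_zero, hq0, mul_zero]
    have : ((-1 : ℝ)) ^ ((0:ℤ) - 1) = -1 := by norm_num
    rw [this]; ring
  · rw [show n + 1 = n + 1 by ring, show n - 1 = n - 1 by ring,
      show (1:ℤ) - 1 = 0 by ring, hq1]
    simpa using hA n
  · intro s hP1 hP
    have hm : ((-1 : ℝ)) ^ (s - 1 - 1) = -(-1 : ℝ) ^ (s - 1) := by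
      rw [show s - 1 - 1 = (s - 1) + (-1) by ring, zpow_add₀ hne]
      norm_num
    have hp : ((-1 : ℝ)) ^ (s + 1 - 1) = -(-1 : ℝ) ^ (s - 1) := by
      rw [show s + 1 - 1 = (s - 1) + 1 by ring, zpow_add₀ hne]
      norm_num
    rw [show n + (s - 1) = n + s - 1 by ring, show n - (s - 1) = n - s + 1 by ring, hm] at hP1
    rw [show n + (s + 1) = n + s + 1 by ring, show n - (s + 1) = n - s - 1 by ring, hp]
    rcases Int.even_or_odd s with hs | hs
    · -- s even, s+1 odd, n+s+1 odd, n-s+1 odd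
      obtain ⟨x, hx⟩ := hn; obtain ⟨y, hy⟩ := hs
      have r1 := hqo (n + s + 1) ⟨x + y, by omega⟩
      rw [show n + s + 1 - 1 = n + s by ring, show n + s + 1 - 2 = n + s - 1 by ring] at r1
      have r2 := hqo (n - s + 1) ⟨x - y, by omega⟩
      rw [show n - s + 1 - 1 = n - s by ring, show n - s + 1 - 2 = n - s - 1 by ring] at r2
      have r3 := hqo (s + 1) ⟨y, by omega⟩
      rw [show s + 1 - 1 = s by ring, show s + 1 - 2 = s - 1 by ring] at r3
      linear_combination b * hP + hP1 + r1 + ((-1 : ℝ) ^ (s - 1)) * r2 - (l n) * r3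
    · obtain ⟨x, hx⟩ := hn; obtain ⟨y, hy⟩ := hs
      have r1 := hqe (n + s + 1) ⟨x + y + 1, by omega⟩
      rw [show n + s + 1 - 1 = n + s by ring, show n + s + 1 - 2 = n + s - 1 by ring] at r1
      have r2 := hqe (n - s + 1) ⟨x - y, by omega⟩
      rw [show n - s + 1 - 1 = n - s by ring, show n - s + 1 - 2 = n - s - 1 by ring] at r2
      have r3 := hqe (s + 1) ⟨y + 1, by omega⟩
      rw [show s + 1 - 1 = s by ring, show s + 1 - 2 = s - 1 by ring] at r3
      linear_combination a * hP + hP1 + r1 + ((-1 : ℝ) ^ (s - 1)) * r2 - (l n) * r3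
  · intro s hP hP1
    have hm : ((-1 : ℝ)) ^ (s - 1 - 1) = -(-1 : ℝ) ^ (s - 1) := by
      rw [show s - 1 - 1 = (s - 1) + (-1) by ring, zpow_add₀ hne]
      norm_num
    have hp : ((-1 : ℝ)) ^ (s + 1 - 1) = -(-1 : ℝ) ^ (s - 1) := by
      rw [show s + 1 - 1 = (s - 1) + 1 by ring, zpow_add₀ hne]
      norm_num
    rw [show n + (s + 1) = n + s + 1 by ring, show n - (s + 1) = n - s - 1 by ring, hp] at hP1
    rw [show n + (s - 1) = n + s - 1 by ring, show n - (s - 1) = n - s + 1 by ring, hm]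
    rcases Int.even_or_odd s with hs | hs
    · obtain ⟨x, hx⟩ := hn; obtain ⟨y, hy⟩ := hs
      have r1 := hqo (n + s + 1) ⟨x + y, by omega⟩
      rw [show n + s + 1 - 1 = n + s by ring, show n + s + 1 - 2 = n + s - 1 by ring] at r1
      have r2 := hqo (n - s + 1) ⟨x - y, by omega⟩
      rw [show n - s + 1 - 1 = n - s by ring, show n - s + 1 - 2 = n - s - 1 by ring] at r2
      have r3 := hqo (s + 1) ⟨y, by omega⟩
      rw [show s + 1 - 1 = s by ring, show s + 1 - 2 = s - 1 by ring] at r3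
      linear_combination hP1 - b * hP - r1 - ((-1 : ℝ) ^ (s - 1)) * r2 + (l n) * r3
    · obtain ⟨x, hx⟩ := hn; obtain ⟨y, hy⟩ := hs
      have r1 := hqe (n + s + 1) ⟨x + y + 1, by omega⟩
      rw [show n + s + 1 - 1 = n + s by ring, show n + s + 1 - 2 = n + s - 1 by ring] at r1
      have r2 := hqe (n - s + 1) ⟨x - y, by omega⟩
      rw [show n - s + 1 - 1 = n - s by ring, show n - s + 1 - 2 = n - s - 1 by ring] at r2
      have r3 := hqe (s + 1) ⟨y + 1, by omega⟩
      rw [show s + 1 - 1 = s by ring, show s + 1 - 2 = s - 1 by ring] at r3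
      linear_combination hP1 - a * hP - r1 - ((-1 : ℝ) ^ (s - 1)) * r2 + (l n) * r3
end

section
/- For all real numbers a, b and every integer n, the bi-periodic Fibonacci and Lucas numbers satisfy (a*b + 4) * q n = l (n−1) + l (n+1). (This is Equation (9).) -/
theorem biperiodic_fib_eq_lucas_sum (a b : ℝ)
    (q : ℤ → ℝ) (hq0 : q 0 = 0) (hq1 : q 1 = 1)
    (hqe : ∀ n : ℤ, Even n → q n = a * q (n - 1) + q (n - 2))
    (hqo : ∀ n : ℤ, Odd n → q n = b * q (n - 1) + q (n - 2))
    (l : ℤ → ℝ) (hl0 : l 0 = 2) (hl1 : l 1 = a)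
    (hle : ∀ n : ℤ, Even n → l n = b * l (n - 1) + l (n - 2))
    (hlo : ∀ n : ℤ, Odd n → l n = a * l (n - 1) + l (n - 2)) :
    ∀ n : ℤ, (a * b + 4) * q n = l (n - 1) + l (n + 1) := by
  set P : ℤ → Prop := fun n => (a * b + 4) * q n = l (n - 1) + l (n + 1) with hP
  suffices h : ∀ n : ℤ, P n ∧ P (n + 1) by
    intro n; exact (h n).1
  have step : ∀ m : ℤ, P m → P (m + 1) → P (m + 2) := by
    intro m hm hm1
    simp only [hP] at hm hm1 ⊢
    rw [show m + 1 - 1 = m by ring, show m + 1 + 1 = m + 2 by ring] at hm1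
    rw [show m + 2 - 1 = m + 1 by ring, show m + 2 + 1 = m + 3 by ring]
    rcases Int.even_or_odd m with ⟨t, ht⟩ | ⟨t, ht⟩
    · have hq2 := hqe (m + 2) ⟨t + 1, by omega⟩
      rw [show m + 2 - 1 = m + 1 by ring, show m + 2 - 2 = m by ring] at hq2
      have hl3 := hlo (m + 3) ⟨t + 1, by omega⟩
      rw [show m + 3 - 1 = m + 2 by ring, show m + 3 - 2 = m + 1 by ring] at hl3
      have hlp := hlo (m + 1) ⟨t, by omega⟩
      rw [show m + 1 - 1 = m by ring, show m + 1 - 2 = m - 1 by ring] at hlp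
      linear_combination (a * b + 4) * hq2 + a * hm1 + hm - hl3 - hlp
    · have hq2 := hqo (m + 2) ⟨t + 1, by omega⟩
      rw [show m + 2 - 1 = m + 1 by ring, show m + 2 - 2 = m by ring] at hq2
      have hl3 := hle (m + 3) ⟨t + 2, by omega⟩
      rw [show m + 3 - 1 = m + 2 by ring, show m + 3 - 2 = m + 1 by ring] at hl3
      have hlp := hle (m + 1) ⟨t + 1, by omega⟩
      rw [show m + 1 - 1 = m by ring, show m + 1 - 2 = m - 1 by ring] at hlp
      linear_combination (a * b + 4) * hq2 + b * hm1 + hm - hl3 - hlp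
  have stepb : ∀ m : ℤ, P (m + 1) → P (m + 2) → P m := by
    intro m hm1 hm2
    simp only [hP] at hm1 hm2 ⊢
    rw [show m + 1 - 1 = m by ring, show m + 1 + 1 = m + 2 by ring] at hm1
    rw [show m + 2 - 1 = m + 1 by ring, show m + 2 + 1 = m + 3 by ring] at hm2
    rcases Int.even_or_odd m with ⟨t, ht⟩ | ⟨t, ht⟩
    · have hq2 := hqe (m + 2) ⟨t + 1, by omega⟩
      rw [show m + 2 - 1 = m + 1 by ring, show m + 2 - 2 = m by ring] at hq2
      have hl3 := hlo (m + 3) ⟨t + 1, by omega⟩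
      rw [show m + 3 - 1 = m + 2 by ring, show m + 3 - 2 = m + 1 by ring] at hl3
      have hlp := hlo (m + 1) ⟨t, by omega⟩
      rw [show m + 1 - 1 = m by ring, show m + 1 - 2 = m - 1 by ring] at hlp
      linear_combination -(a * b + 4) * hq2 - a * hm1 + hm2 + hl3 + hlp
    · have hq2 := hqo (m + 2) ⟨t + 1, by omega⟩
      rw [show m + 2 - 1 = m + 1 by ring, show m + 2 - 2 = m by ring] at hq2
      have hl3 := hle (m + 3) ⟨t + 2, by omega⟩
      rw [show m + 3 - 1 = m + 2 by ring, show m + 3 - 2 = m + 1 by ring] at hl3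
      have hlp := hle (m + 1) ⟨t + 1, by omega⟩
      rw [show m + 1 - 1 = m by ring, show m + 1 - 2 = m - 1 by ring] at hlp
      linear_combination -(a * b + 4) * hq2 - b * hm1 + hm2 + hl3 + hlp
  have base0 : P 0 := by
    simp only [hP]
    have h1 := hlo 1 ⟨0, by norm_num⟩
    norm_num at h1 ⊢
    rw [hl1, hl0] at h1
    rw [hq0, hl1]
    linear_combination h1
  have base1 : P 1 := by
    simp only [hP]
    have h2 := hle 2 ⟨1, by norm_num⟩
    norm_num at h2 ⊢
    rw [hl1, hl0] at h2
    rw [hq1, hl0]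
    linear_combination -h2
  intro n
  induction n using Int.induction_on with
  | zero => exact ⟨base0, base1⟩
  | succ k ih =>
    refine ⟨ih.2, ?_⟩
    rw [show (k : ℤ) + 1 + 1 = k + 2 by ring]
    exact step k ih.1 ih.2
  | pred k ih =>
    have h1 : P (-(k : ℤ)) := ih.1
    have h2 : P (-(k : ℤ) + 1) := ih.2
    constructor
    · have := stepb (-(k : ℤ) - 1) (by rw [show -(k:ℤ) - 1 + 1 = -k by ring]; exact h1)
        (by rw [show -(k:ℤ) - 1 + 2 = -k + 1 by ring]; exact h2)
      exact this
    · rw [show -(k : ℤ) - 1 + 1 = -k by ring]; exact h1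
end

section
/- Let a, b be real numbers with a > 0 and b > 0, and let α = (a*b + √(a²b² + 4ab))/2 and β = (a*b − √(a²b² + 4ab))/2. Then for every natural number m, the bi-periodic Lucas numbers satisfy l (2m) = (α^(2m) + β^(2m)) / (a*b)^m and l (2m+1) = a * (α^(2m+1) + β^(2m+1)) / (a*b)^(m+1). (This is the Binet formula for the bi-periodic Lucas sequence, Equation (5).) -/
theorem biperiodic_lucas_binet (a b : ℝ) (ha : 0 < a) (hb : 0 < b)
    (l : ℤ → ℝ) (hl0 : l 0 = 2) (hl1 : l 1 = a)
    (hle : ∀ n : ℤ, Even n → l n = b * l (n - 1) + l (n - 2))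
    (hlo : ∀ n : ℤ, Odd n → l n = a * l (n - 1) + l (n - 2))
    (α β : ℝ)
    (hα : α = (a * b + Real.sqrt (a ^ 2 * b ^ 2 + 4 * (a * b))) / 2)
    (hβ : β = (a * b - Real.sqrt (a ^ 2 * b ^ 2 + 4 * (a * b))) / 2) :
    ∀ m : ℕ, l (2 * m) = (α ^ (2 * m) + β ^ (2 * m)) / (a * b) ^ m ∧
      l (2 * m + 1) = a * (α ^ (2 * m + 1) + β ^ (2 * m + 1)) / (a * b) ^ (m + 1) := by
  have hab : (0:ℝ) < a * b := mul_pos ha hb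
  have habne : a * b ≠ 0 := ne_of_gt hab
  have hD : (0:ℝ) ≤ a ^ 2 * b ^ 2 + 4 * (a * b) := by positivity
  have hs : Real.sqrt (a ^ 2 * b ^ 2 + 4 * (a * b)) ^ 2 = a ^ 2 * b ^ 2 + 4 * (a * b) :=
    Real.sq_sqrt hD
  have hα2 : α ^ 2 = a * b * α + a * b := by
    rw [hα]; linear_combination (1/4) * hs
  have hβ2 : β ^ 2 = a * b * β + a * b := by
    rw [hβ]; linear_combination (1/4) * hs
  have hsum : α + β = a * b := by rw [hα, hβ]; ring
  intro m
  induction m with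
  | zero =>
    constructor
    · push_cast; simp only [mul_zero, pow_zero]; rw [hl0]; norm_num
    · simp only [Nat.cast_zero, mul_zero, zero_add, pow_one]
      rw [hl1, hsum]
      field_simp
  | succ k ih =>
    obtain ⟨ihe, iho⟩ := ih
    have h1 : l (2 * ((k : ℤ) + 1)) = b * l (2 * k + 1) + l (2 * k) := by
      have := hle (2 * ((k : ℤ) + 1)) ⟨(k : ℤ) + 1, by ring⟩
      convert this using 3 <;> ring
    have h2 : l (2 * ((k : ℤ) + 1) + 1) = a * l (2 * ((k : ℤ) + 1)) + l (2 * k + 1) := by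
      have := hlo (2 * ((k : ℤ) + 1) + 1) ⟨(k : ℤ) + 1, by ring⟩
      convert this using 3 <;> ring
    have habpow : (a * b) ^ k ≠ 0 := pow_ne_zero _ habne
    constructor
    · push_cast
      rw [h1, iho, ihe]
      field_simp
      ring_nf
      linear_combination (-((a*b)^k * α^(2*k))) * hα2 + (-((a*b)^k * β^(2*k))) * hβ2
    · push_cast
      rw [h2, h1, iho, ihe]
      field_simp
      ring_nf
      linear_combination (-((a*b)^(2*k+1)*(α+a*b)*α^(2*k))) * hα2 + (-((a*b)^(2*k+1)*(β+a*b)*β^(2*k))) * hβ2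
end

section
/- For all real numbers a, b, the formal power series identity (1 − (a*b + 2)*X² + X⁴) * F(X) = X − X³ holds in ℝ⟦X⟧, where F(X) is the formal power series whose n-th coefficient is q n if n is odd and 0 if n is even. (This is the generating function of the odd-subscripted bi-periodic Fibonacci numbers, Equation (7), used in the proof of the paper's generating function theorem.) -/
theorem biperiodic_fib_odd_gen_fun (a b : ℝ)
    (q : ℤ → ℝ) (hq0 : q 0 = 0) (hq1 : q 1 = 1)
    (hqe : ∀ n : ℤ, Even n → q n = a * q (n - 1) + q (n - 2))
    (hqo : ∀ n : ℤ, Odd n → q n = b * q (n - 1) + q (n - 2)) :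
    (1 - PowerSeries.C (a * b + 2) * PowerSeries.X ^ 2 + PowerSeries.X ^ 4) *
        PowerSeries.mk (fun n : ℕ => if Odd n then q n else 0) =
      PowerSeries.X - PowerSeries.X ^ 3 := by
  have key : ∀ n : ℤ, Odd n → q n = (a * b + 2) * q (n - 2) - q (n - 4) := by
    intro n hn
    have h1 := hqo n hn
    have h2 := hqe (n - 1) (by rcases hn with ⟨k, hk⟩; exact ⟨k, by omega⟩)
    have h3 := hqo (n - 2) (by rcases hn with ⟨k, hk⟩; exact ⟨k - 1, by omega⟩)
    rw [show n - 1 - 1 = n - 2 by ring, show n - 1 - 2 = n - 3 by ring] at h2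
    rw [show n - 2 - 1 = n - 3 by ring, show n - 2 - 2 = n - 4 by ring] at h3
    linear_combination h1 + b * h2 - h3
  have hq2 : q 2 = a := by
    have := hqe 2 (by norm_num)
    simpa [hq0, hq1] using this
  have hq3 : q 3 = a * b + 1 := by
    have := hqo 3 ⟨1, by norm_num⟩
    rw [show (3:ℤ) - 1 = 2 by ring, show (3:ℤ) - 2 = 1 by ring, hq2, hq1] at this
    linarith
  obtain ⟨c, hc⟩ : ∃ c, a * b + 2 = c := ⟨_, rfl⟩
  rw [hc] at key
  rw [hc]
  ext n
  rw [add_mul, sub_mul, one_mul, mul_assoc]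
  simp only [map_add, map_sub, PowerSeries.coeff_C_mul,
    PowerSeries.coeff_X_pow_mul', PowerSeries.coeff_mk,
    PowerSeries.coeff_X, PowerSeries.coeff_X_pow]
  match n with
  | 0 => norm_num
  | 1 => norm_num [hq1]
  | 2 => norm_num
  | 3 => norm_num [hq3, hq1, ← hc, Nat.odd_iff]
  | (m + 4) =>
    have h4 : (2:ℕ) ≤ m + 4 := by omega
    have h5 : (4:ℕ) ≤ m + 4 := by omega
    rw [if_pos h4, if_pos h5]
    have e1 : m + 4 - 2 = m + 2 := by omega
    have e2 : m + 4 - 4 = m := by omega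
    rw [e1, e2]
    by_cases hodd : Odd (m + 4)
    · have ho2 : Odd (m + 2) := by rcases hodd with ⟨k, hk⟩; exact ⟨k - 1, by omega⟩
      have hom : Odd m := by rcases hodd with ⟨k, hk⟩; exact ⟨k - 2, by omega⟩
      rw [if_pos hodd, if_pos ho2, if_pos hom]
      have := key ((m : ℤ) + 4) (by exact_mod_cast hodd.natCast (R := ℤ))
      rw [show (m : ℤ) + 4 - 2 = (m : ℤ) + 2 by ring, show (m : ℤ) + 4 - 4 = (m : ℤ) by ring] at this
      push_cast
      linarith [this]
    · have ho2 : ¬ Odd (m + 2) := fun h => hodd (by rcases h with ⟨k, hk⟩; exact ⟨k + 1, by omega⟩)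
      have hom : ¬ Odd m := fun h => hodd (by rcases h with ⟨k, hk⟩; exact ⟨k + 2, by omega⟩)
      have hne1 : m + 4 ≠ 1 := by omega
      have hne3 : m + 4 ≠ 3 := by omega
      simp [hodd, ho2, hom, hne1, hne3]
end

section
/- For all real numbers a, b, the formal power series identity (1 − (a*b + 2)*X² + X⁴) * L(X) = a*X + a*X³ holds in ℝ⟦X⟧, where L(X) is the formal power series whose n-th coefficient is l n if n is odd and 0 if n is even. (This is the generating function of the odd-subscripted bi-periodic Lucas numbers, Equation (8).) -/
theorem biperiodic_lucas_odd_gen_fun (a b : ℝ)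
    (l : ℤ → ℝ) (hl0 : l 0 = 2) (hl1 : l 1 = a)
    (hle : ∀ n : ℤ, Even n → l n = b * l (n - 1) + l (n - 2))
    (hlo : ∀ n : ℤ, Odd n → l n = a * l (n - 1) + l (n - 2)) :
    (1 - PowerSeries.C (a * b + 2) * PowerSeries.X ^ 2 + PowerSeries.X ^ 4) *
        PowerSeries.mk (fun n : ℕ => if Odd n then l n else 0) =
      PowerSeries.C a * PowerSeries.X + PowerSeries.C a * PowerSeries.X ^ 3 := by
  have hrec : ∀ k : ℤ, Odd k → l (k + 4) = (a * b + 2) * l (k + 2) - l k := by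
    intro k hk
    have h1 := hlo (k + 4) (by obtain ⟨m, hm⟩ := hk; exact ⟨m + 2, by omega⟩)
    have h2 := hle (k + 3) (by obtain ⟨m, hm⟩ := hk; exact ⟨m + 2, by omega⟩)
    have h3 := hlo (k + 2) (by obtain ⟨m, hm⟩ := hk; exact ⟨m + 1, by omega⟩)
    rw [show k + 4 - 1 = k + 3 by ring, show k + 4 - 2 = k + 2 by ring] at h1
    rw [show k + 3 - 1 = k + 2 by ring, show k + 3 - 2 = k + 1 by ring] at h2
    rw [show k + 2 - 1 = k + 1 by ring, show k + 2 - 2 = k by ring] at h3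
    linear_combination h1 + a * h2 - h3
  ext n
  simp only [sub_mul, add_mul, one_mul, mul_assoc, map_sub, map_add,
    PowerSeries.coeff_X_pow_mul', PowerSeries.coeff_C_mul, PowerSeries.coeff_mk,
    PowerSeries.coeff_X, PowerSeries.coeff_X_pow]
  obtain _ | _ | _ | _ | n := n
  · norm_num
  · norm_num [hl1]
  · norm_num
  · have h2 : l 2 = b * a + 2 := by
      have := hle 2 (by decide); rw [show (2:ℤ)-1 = 1 by ring, show (2:ℤ)-2 = 0 by ring, hl0, hl1] at this; linarith
    have h3 := hlo 3 (by decide)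
    rw [show (3:ℤ)-1 = 2 by ring, show (3:ℤ)-2 = 1 by ring, h2, hl1] at h3
    norm_num
    push_cast
    rw [h3, hl1]; ring
  · have hn4 : (4:ℕ) ≤ n + 4 := by omega
    have hn2 : (2:ℕ) ≤ n + 4 := by omega
    rw [if_pos hn2, if_pos hn4]
    have e1 : n + 4 - 2 = n + 2 := by omega
    have e2 : n + 4 - 4 = n := by omega
    rw [e1, e2]
    have : ¬ (n + 4 = 1) := by omega
    rw [if_neg this, if_neg (by omega : ¬ (n + 4 = 3))]
    have hpar : Odd (n + 4) ↔ Odd n := by simp [Nat.odd_iff]; omega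
    have hpar2 : Odd (n + 2) ↔ Odd n := by simp [Nat.odd_iff]
    rcases Nat.even_or_odd n with he | ho
    · rw [if_neg, if_neg, if_neg] <;> simp [hpar, hpar2, he]
    · rw [if_pos (hpar.mpr ho), if_pos (hpar2.mpr ho), if_pos ho]
      have := hrec n (by exact_mod_cast ho)
      push_cast at this ⊢
      rw [show ((n:ℤ)+1+1+1+1 : ℤ) = (n:ℤ)+4 by ring, this]; ring
end
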